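/- arXiv:1901.02417 — 6 statements merged into one kernel-verified Lean document; each statement's English description precedes it below -/
import Mathlib

section
/- Let M be a Jónsson model for λ, let α<λ, and let E∈M be a set of ordinals closed under suprema of increasing sequences of length ≤β_M(α), with α∈E. Then β_M(α)∈E. -/
open FirstOrder Cardinal Set

namespace Paper

/-- Relations of the language `{∈, <}`. -/
inductive SetRel : ℕ → Type
  | mem : SetRel 2
  | lt : SetRel 2

/-- The first-order language with two binary relations, membership and a well-order. -/
def L : FirstOrder.Language := ⟨fun _ => Empty, SetRel⟩

/-- `x` is hereditarily of cardinality `< χ`. -/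
def InH (χ : Cardinal.{0}) (x : ZFSet.{0}) : Prop :=
  ZFSet.Hereditarily (fun y => Cardinal.mk y.toSet.Elem < Cardinal.lift.{1, 0} χ) x

/-- The collection `H(χ)` of sets hereditarily of cardinality `< χ`. -/
def HType (χ : Cardinal) : Type 1 := {x : ZFSet // InH χ x}

/-- `H(χ)` as a structure in the language `{∈, <}`, where `<` is interpreted as a fixed
well-order of `H(χ)` (given by the well-ordering theorem). -/
noncomputable instance HStructure (χ : Cardinal) : L.Structure (HType χ) where
  funMap := fun f _ => f.elim
  RelMap | .mem => fun v => (v 0).1 ∈ (v 1).1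
         | .lt => fun v => WellOrderingRel (v 0) (v 1)

/-- `x` is the von Neumann ordinal representing the ordinal `o`. -/
def reprOrd (x : ZFSet) (o : Ordinal) : Prop := x.IsOrdinal ∧ ZFSet.rank x = o

/-- The set of ordinals represented by a member of `M`, i.e. `M ∩ Ord`. -/
def MOrds {χ : Cardinal} (M : L.ElementarySubstructure (HType χ)) : Set Ordinal :=
  {o | ∃ x : HType χ, x ∈ M ∧ reprOrd x.1 o}

/-- `M` is a Jónsson model for `λ`: an elementary submodel of `(H(χ), ∈, <_χ)` with
`|M ∩ λ| = λ`, `λ ∈ M` and `λ ⊄ M`. -/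
def IsJonssonModelFor (lam χ : Cardinal) (M : L.ElementarySubstructure (HType χ)) : Prop :=
  Cardinal.mk ↥(MOrds M ∩ Set.Iio lam.ord) = Cardinal.lift.{1} lam ∧
  (∃ x : HType χ, x ∈ M ∧ reprOrd x.1 lam.ord) ∧
  ¬ Set.Iio lam.ord ⊆ MOrds M

/-- The map `β_M(α) = min((M ∩ λ) \ α)`. -/
noncomputable def betaM {χ : Cardinal} (M : L.ElementarySubstructure (HType χ))
    (lam : Cardinal) (α : Ordinal) : Ordinal :=
  sInf ((MOrds M ∩ Set.Iio lam.ord) \ Set.Iio α)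

/-- The set of ordinals coded by the elements of the ZF-set `e`. -/
def decodeOrds (e : ZFSet) : Set Ordinal := {o | ∃ y, y ∈ e ∧ reprOrd y o}

/-! ### Auxiliary lemmas on von Neumann ordinals -/

theorem isOrdinal_of_mem {x y : ZFSet} (hx : x.IsOrdinal) (hy : y ∈ x) : y.IsOrdinal where
  isTransitive := fun a ha b hb => hx.mem_trans' hb ha hy
  mem_trans' := fun {a b c} hab hbc hcy => hx.mem_trans' hab hbc (hx.isTransitive.mem_trans hcy hy)

theorem ord_tri : ∀ u v : ZFSet, u.IsOrdinal → v.IsOrdinal → u ∈ v ∨ u = v ∨ v ∈ u := by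
  intro u
  induction u using ZFSet.inductionOn with
  | _ u IH1 =>
    intro v
    induction v using ZFSet.inductionOn with
    | _ v IH2 =>
      intro hu hv
      by_cases h1 : u ∈ v
      · exact Or.inl h1
      by_cases h2 : v ∈ u
      · exact Or.inr (Or.inr h2)
      refine Or.inr (Or.inl (ZFSet.ext fun z => ⟨fun hz => ?_, fun hz => ?_⟩))
      · rcases IH1 z hz v (isOrdinal_of_mem hu hz) hv with h | h | h
        · exact h
        · exact absurd (h ▸ hz) h2
        · exact absurd (hu.mem_trans h hz) h2
      · rcases IH2 z hz hu (isOrdinal_of_mem hv hz) with h | h | h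
        · exact absurd (hv.mem_trans h hz) h1
        · exact absurd (h ▸ hz) h1
        · exact h

theorem mem_of_rank_lt' {u v : ZFSet} (hu : u.IsOrdinal) (hv : v.IsOrdinal)
    (h : ZFSet.rank u < ZFSet.rank v) : u ∈ v := by
  rcases ord_tri u v hu hv with h' | rfl | h'
  · exact h'
  · exact absurd h (lt_irrefl _)
  · exact absurd (ZFSet.rank_lt_of_mem h') h.asymm

theorem InH_of_subset {χ : Cardinal} {x b : ZFSet} (hb : InH χ b) (h : x ⊆ b) : InH χ x := by
  rw [InH, ZFSet.hereditarily_iff]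
  exact ⟨lt_of_le_of_lt (Cardinal.mk_le_mk_of_subset fun z hz => h hz)
      (ZFSet.Hereditarily.self hb),
    fun y hy => ZFSet.Hereditarily.mem hb (h hy)⟩

/-! ### A first-order formula defining `⋃₀ (e ∩ b)` -/

open FirstOrder.Language

@[simp] lemma relMap_mem {χ : Cardinal} (v : Fin 2 → HType χ) :
    @Structure.RelMap L (HType χ) (HStructure χ) 2 SetRel.mem v ↔ (v 0).1 ∈ (v 1).1 :=
  Iff.rfl

private def fv (i : Fin 2) {n : ℕ} : L.Term (Fin 2 ⊕ Fin n) := Term.var (Sum.inl i)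
private def bv {n : ℕ} (i : Fin n) : L.Term (Fin 2 ⊕ Fin n) := Term.var (Sum.inr i)

def memB {n : ℕ} (t u : L.Term (Fin 2 ⊕ Fin n)) : L.BoundedFormula (Fin 2) n :=
  Relations.boundedFormula (SetRel.mem : L.Relations 2) ![t, u]

/-- The formula (with one bound variable `x` and free variables `e`, `b`) expressing
`∀ z (z ∈ x ↔ ∃ y (y ∈ e ∧ y ∈ b ∧ z ∈ y))`, i.e. `x = ⋃₀ (e ∩ b)`. -/
def ψ : L.BoundedFormula (Fin 2) 1 :=
  BoundedFormula.all ((memB (bv 1) (bv 0)).iff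
    (BoundedFormula.ex ((memB (bv 2) (fv 0)) ⊓ ((memB (bv 2) (fv 1)) ⊓ (memB (bv 1) (bv 2))))))

/-- The sentence with parameters `e`, `b` expressing `∃ x, x = ⋃₀ (e ∩ b)`. -/
def Φ : L.Formula (Fin 2) := ψ.ex

/-- The semantic content of `ψ`. -/
def P {χ : Cardinal} (x e b : HType χ) : Prop :=
  ∀ z : HType χ, z.1 ∈ x.1 ↔ ∃ y : HType χ, y.1 ∈ e.1 ∧ y.1 ∈ b.1 ∧ z.1 ∈ y.1

lemma realize_ψ {χ : Cardinal} (v : Fin 2 → HType χ) (xs : Fin 1 → HType χ) :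
    ψ.Realize v xs ↔ P (xs 0) (v 0) (v 1) := by
  have hmem : ∀ {n : ℕ} (t u : L.Term (Fin 2 ⊕ Fin n)) (ys : Fin n → HType χ), (memB t u).Realize v ys ↔
      (t.realize (Sum.elim v ys)).1 ∈ (u.realize (Sum.elim v ys)).1 := fun _ _ _ => Iff.rfl
  simp [ψ, hmem, bv, fv, P, BoundedFormula.realize_iff, Fin.snoc, Fin.castPred_zero]

lemma realize_Φ {χ : Cardinal} (v : Fin 2 → HType χ) :
    Φ.Realize v ↔ ∃ x : HType χ, P x (v 0) (v 1) := by
  rw [Φ, Formula.Realize]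
  simp only [BoundedFormula.realize_ex]
  refine exists_congr fun x => ?_
  rw [realize_ψ]
  simp [Fin.snoc]

/-- If `M` is a Jónsson model for `λ`, `α < λ`, and `E ∈ M` is a set of ordinals closed
under suprema of increasing sequences of length `≤ β_M(α)` with `α ∈ E`, then `β_M(α) ∈ E`. -/
theorem stmt1 (lam χ : Cardinal) (hlam : lam < χ) (hχ : χ.IsRegular)
    (M : L.ElementarySubstructure (HType χ)) (hM : IsJonssonModelFor lam χ M)
    (α : Ordinal) (hα : α < lam.ord)
    (e : HType χ) (he : e ∈ M) (hords : ∀ y, y ∈ e.1 → ZFSet.IsOrdinal y)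
    (hαE : α ∈ decodeOrds e.1)
    (hclosed : ∀ ι : Ordinal, ι ≤ betaM M lam α → ∀ f : Ordinal → Ordinal,
      StrictMonoOn f (Set.Iio ι) → (∀ i < ι, f i ∈ decodeOrds e.1) →
      sSup (f '' Set.Iio ι) ∈ decodeOrds e.1) :
    betaM M lam α ∈ decodeOrds e.1 := by
  classical
  set β := betaM M lam α with hβdef
  -- the defining set of β is nonempty, so β is a genuine minimum
  have hSne : ((MOrds M ∩ Set.Iio lam.ord) \ Set.Iio α).Nonempty := by
    by_contra h
    rw [Set.not_nonempty_iff_eq_empty, Set.diff_eq_empty] at h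
    have h1 : Cardinal.mk ↥(MOrds M ∩ Set.Iio lam.ord) ≤ Cardinal.mk ↥(Set.Iio α) :=
      Cardinal.mk_le_mk_of_subset h
    rw [hM.1, Ordinal.mk_Iio_ordinal, Cardinal.lift_le] at h1
    exact absurd hα (not_lt.2 (Cardinal.ord_le.2 h1))
  have hβS : β ∈ (MOrds M ∩ Set.Iio lam.ord) \ Set.Iio α := csInf_mem hSne
  obtain ⟨⟨hβM, hβlt⟩, hβge'⟩ := hβS
  have hαβ : α ≤ β := le_of_not_gt hβge'
  rcases eq_or_lt_of_le hαβ with heq | hαβ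
  · rw [← heq]; exact hαE
  obtain ⟨b, hbM, hbord, hbrank⟩ := hβM
  -- the candidate set x0 = ⋃₀ (e ∩ b)
  set x0 : ZFSet := ZFSet.sUnion (e.1 ∩ b.1) with hx0
  have hxsub : x0 ⊆ b.1 := by
    intro z hz
    obtain ⟨y, hy, hzy⟩ := ZFSet.mem_sUnion.1 hz
    exact (hbord.subset_of_mem (ZFSet.mem_inter.1 hy).2) hzy
  have hxH : InH χ x0 := InH_of_subset b.2 hxsub
  have hxord : x0.IsOrdinal := by
    constructor
    · exact ZFSet.IsTransitive.sUnion' fun y hy =>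
        (hords y (ZFSet.mem_inter.1 hy).1).isTransitive
    · intro y z w hyz hzw hwx
      obtain ⟨c, hc, hwc⟩ := ZFSet.mem_sUnion.1 hwx
      exact (isOrdinal_of_mem (hords c (ZFSet.mem_inter.1 hc).1) hwc).mem_trans hyz hzw
  -- the set of ordinals coded by e below β
  set s : Set Ordinal := decodeOrds e.1 ∩ Set.Iio β with hsdef
  have hαs : α ∈ s := ⟨hαE, hαβ⟩
  have hsbdd : BddAbove s := ⟨β, fun o ho => ho.2.le⟩
  have hsne : s.Nonempty := ⟨α, hαs⟩
  have hrank : ZFSet.rank x0 = sSup s := by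
    apply le_antisymm
    · rw [ZFSet.rank_le_iff]
      intro z hz
      obtain ⟨y, hy, hzy⟩ := ZFSet.mem_sUnion.1 hz
      obtain ⟨hye, hyb⟩ := ZFSet.mem_inter.1 hy
      have h1 : ZFSet.rank y ∈ s :=
        ⟨⟨y, hye, hords y hye, rfl⟩, by rw [← hbrank]; exact ZFSet.rank_lt_of_mem hyb⟩
      exact lt_of_lt_of_le (ZFSet.rank_lt_of_mem hzy) (le_csSup hsbdd h1)
    · apply csSup_le hsne
      rintro o ⟨⟨y, hye, hyord, rfl⟩, ho⟩
      have hyb : y ∈ b.1 := mem_of_rank_lt' hyord hbord (by rw [hbrank]; exact ho)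
      exact ZFSet.rank_mono fun z hz =>
        ZFSet.mem_sUnion.2 ⟨y, ZFSet.mem_inter.2 ⟨hye, hyb⟩, hz⟩
  -- x0 satisfies the defining property
  have hP : P ⟨x0, hxH⟩ e b := by
    intro z
    constructor
    · intro hz
      obtain ⟨y, hy, hzy⟩ := ZFSet.mem_sUnion.1 hz
      obtain ⟨hye, hyb⟩ := ZFSet.mem_inter.1 hy
      exact ⟨⟨y, ZFSet.Hereditarily.mem e.2 hye⟩, hye, hyb, hzy⟩
    · rintro ⟨y, hye, hyb, hzy⟩
      exact ZFSet.mem_sUnion.2 ⟨y.1, ZFSet.mem_inter.2 ⟨hye, hyb⟩, hzy⟩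
  -- the defining property is unique in H(χ)
  have huniq : ∀ u u' : HType χ, P u e b → P u' e b → u = u' := by
    intro u u' hu hu'
    apply Subtype.ext
    apply ZFSet.ext
    intro z
    constructor
    · intro hz
      have hzH : InH χ z := ZFSet.Hereditarily.mem u.2 hz
      exact (hu' ⟨z, hzH⟩).2 ((hu ⟨z, hzH⟩).1 hz)
    · intro hz
      have hzH : InH χ z := ZFSet.Hereditarily.mem u'.2 hz
      exact (hu ⟨z, hzH⟩).2 ((hu' ⟨z, hzH⟩).1 hz)
  -- transfer through the elementary substructure: x0 ∈ M
  have hxmem : (⟨x0, hxH⟩ : HType χ) ∈ M := by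
    set em : M := ⟨e, he⟩ with hem
    set bm : M := ⟨b, hbM⟩ with hbm
    have hcomp : (⇑M.subtype ∘ ![em, bm]) = ![e, b] := by
      funext i; fin_cases i <;> rfl
    have hH : Φ.Realize ![e, b] := (realize_Φ _).2 ⟨⟨x0, hxH⟩, by simpa using hP⟩
    have hM1 : Φ.Realize ![em, bm] :=
      (M.subtype.map_formula Φ ![em, bm]).1 (by rw [hcomp]; exact hH)
    rw [Φ, Formula.Realize] at hM1
    obtain ⟨xm, hxm⟩ := BoundedFormula.realize_ex.1 hM1
    have hH2 := (M.subtype.map_boundedFormula ψ _ _).2 hxm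
    rw [hcomp] at hH2
    have hPx : P (M.subtype xm) e b := by
      have h3 := (realize_ψ _ _).1 hH2
      simpa [Fin.snoc] using h3
    have heq := huniq _ _ hPx hP
    rw [← heq]
    exact xm.2
  -- conclude sSup s = β
  have hγM : sSup s ∈ MOrds M := ⟨⟨x0, hxH⟩, hxmem, hxord, hrank⟩
  have hγβ : sSup s ≤ β := csSup_le hsne fun o ho => ho.2.le
  have hβγ : β ≤ sSup s :=
    csInf_le' ⟨⟨hγM, lt_of_le_of_lt hγβ hβlt⟩, not_lt.2 (le_csSup hsbdd hαs)⟩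
  have hγ : sSup s = β := le_antisymm hγβ hβγ
  -- enumerate s ∪ [β, ∞) and apply the closure hypothesis
  set t : Set Ordinal := s ∪ Set.Ici β with htdef
  have htub : ¬ BddAbove t := by
    rintro ⟨c, hc⟩
    have h2 : max β c + 1 ≤ c :=
      hc (Set.mem_union_right _ ((le_max_left β c).trans (le_self_add)))
    have h3 : c + 1 ≤ c := le_trans (add_le_add_left (le_max_right β c) 1) h2
    rw [Ordinal.add_one_eq_succ, Order.succ_le_iff] at h3
    exact lt_irrefl c h3
  have hmono := Ordinal.enumOrd_strictMono htub
  obtain ⟨ι, hι⟩ : ∃ ι, Ordinal.enumOrd t ι = β := by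
    have hr := Ordinal.range_enumOrd htub
    have hβt : β ∈ t := Set.mem_union_right _ (le_refl β)
    rw [← hr] at hβt
    exact hβt
  have hιβ : ι ≤ betaM M lam α := le_trans hmono.le_apply (le_of_eq hι)
  have hvals : ∀ i < ι, Ordinal.enumOrd t i ∈ decodeOrds e.1 := by
    intro i hi
    have h1 : Ordinal.enumOrd t i < β := hι ▸ hmono hi
    rcases (Set.mem_union _ _ _).1 (Ordinal.enumOrd_mem htub i) with hs | hge
    · exact hs.1
    · exact absurd h1 (not_lt.2 hge)
  have himg : Ordinal.enumOrd t '' Set.Iio ι = s := by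
    ext o
    constructor
    · rintro ⟨i, hi, rfl⟩
      have h1 : Ordinal.enumOrd t i < β := hι ▸ hmono hi
      rcases (Set.mem_union _ _ _).1 (Ordinal.enumOrd_mem htub i) with hs | hge
      · exact hs
      · exact absurd h1 (not_lt.2 hge)
    · intro ho
      have hor : o ∈ Set.range (Ordinal.enumOrd t) := by
        rw [Ordinal.range_enumOrd htub]
        exact Or.inl ho
      obtain ⟨i, rfl⟩ := hor
      refine ⟨i, ?_, rfl⟩
      have h1 : Ordinal.enumOrd t i < β := ho.2
      rw [← hι] at h1
      exact hmono.lt_iff_lt.1 h1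
  have hfinal := hclosed ι hιβ (Ordinal.enumOrd t) (hmono.strictMonoOn _) hvals
  rw [himg, hγ] at hfinal
  exact hfinal

end Paper
end

section
/- If λ is weakly inaccessible and GH(θ,λ)≤λ for some regular θ with ω<θ<λ, then for every δ<λ we have GH(θ,δ)<λ. -/
open Cardinal Set

namespace Paper

/-- `g < f` modulo the ideal of bounded subsets of `θ` (functions viewed on `Iio θ`). -/
def ltBd (θo : Ordinal) (g f : Ordinal → Ordinal) : Prop :=
  ∃ β < θo, ∀ i, β ≤ i → i < θo → g i < f i

/-- The ordinal rank of an accessible element of a relation: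
`rank(a) = sup { rank(b) + 1 : b r a }`. -/
noncomputable def accRank {α : Type*} {r : α → α → Prop} {a : α} (h : Acc r a) : Ordinal.{0} :=
  Acc.rec (motive := fun _ _ => Ordinal.{0})
    (fun x _ ih => sSup (Set.range fun y : {y : α // r y x} => Order.succ (ih y.1 y.2))) h

open scoped Classical in
/-- The Galvin–Hajnal rank `‖f‖` of `f : θ → ON` modulo the bounded ideal on `θ`:
`‖f‖ = sup {‖g‖ + 1 : g <_bd f}` (junk value `0` if `f` is not in the well-founded part). -/
noncomputable def GHrank (θo : Ordinal) (f : Ordinal → Ordinal) : Ordinal :=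
  if h : Acc (ltBd θo) f then accRank h else 0

/-- `GH(θ, λ) = min { α : ∀ f : θ → λ, ‖f‖ < α }`. -/
noncomputable def GHbound (θo lamo : Ordinal) : Ordinal :=
  sInf {a : Ordinal | ∀ f : Ordinal → Ordinal, (∀ i < θo, f i < lamo) → GHrank θo f < a}

/-- A weakly inaccessible cardinal: an uncountable regular limit cardinal. -/
def IsWInaccessible (c : Cardinal) : Prop := ℵ₀ < c ∧ c.IsRegular ∧ Order.IsSuccLimit c

/-! ### Auxiliary lemmas -/

instance (θo : Ordinal) : IsIrrefl _ (ltBd θo) :=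
  ⟨fun _ ⟨β, hβ, h⟩ => lt_irrefl _ (h β le_rfl hβ)⟩

instance (θo : Ordinal) : IsTrans _ (ltBd θo) := by
  refine ⟨fun a b c ⟨β, hβ, hab⟩ ⟨γ, hγ, hbc⟩ => ⟨max β γ, max_lt hβ hγ, fun i hi hi' => ?_⟩⟩
  exact lt_trans (hab i (le_trans (le_max_left _ _) hi) hi')
    (hbc i (le_trans (le_max_right _ _) hi) hi')

instance (θo : Ordinal) : IsStrictOrder _ (ltBd θo) := ⟨⟩

lemma accRank_eq {α : Type*} {r : α → α → Prop} {x : α} (h : Acc r x) :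
    accRank h = sSup (Set.range fun y : {y : α // r y x} =>
      Order.succ (accRank (h.inv y.2))) := by
  cases h with
  | intro x h' => rfl

lemma acc_congr {α : Type*} {r : α → α → Prop} {a b : α} (hab : ∀ g, r g a ↔ r g b)
    (ha : Acc r a) : Acc r b :=
  Acc.intro b fun g hg => ha.inv ((hab g).2 hg)

lemma accRank_congr {α : Type*} {r : α → α → Prop} {a b : α} (hab : ∀ g, r g a ↔ r g b)
    (ha : Acc r a) (hb : Acc r b) : accRank ha = accRank hb := by
  rw [accRank_eq ha, accRank_eq hb]
  congr 1
  ext x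
  constructor
  · rintro ⟨⟨y, hy⟩, rfl⟩
    exact ⟨⟨y, (hab y).1 hy⟩, rfl⟩
  · rintro ⟨⟨y, hy⟩, rfl⟩
    exact ⟨⟨y, (hab y).2 hy⟩, rfl⟩

lemma ltBd_congr {θo : Ordinal.{0}} {f f' : Ordinal → Ordinal}
    (h : ∃ β < θo, ∀ i, β ≤ i → i < θo → f i = f' i) (g : Ordinal → Ordinal) :
    ltBd θo g f ↔ ltBd θo g f' := by
  obtain ⟨β, hβ, hff'⟩ := h
  constructor <;> rintro ⟨γ, hγ, hg⟩ <;>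
    refine ⟨max β γ, max_lt hβ hγ, fun i hi hi' => ?_⟩
  · rw [← hff' i (le_trans (le_max_left _ _) hi) hi']
    exact hg i (le_trans (le_max_right _ _) hi) hi'
  · rw [hff' i (le_trans (le_max_left _ _) hi) hi']
    exact hg i (le_trans (le_max_right _ _) hi) hi'

lemma GHrank_congr {θo : Ordinal.{0}} {f f' : Ordinal → Ordinal}
    (h : ∃ β < θo, ∀ i, β ≤ i → i < θo → f i = f' i) :
    GHrank θo f = GHrank θo f' := by
  unfold GHrank
  by_cases hf : Acc (ltBd θo) f
  · have hf' : Acc (ltBd θo) f' := acc_congr (ltBd_congr h) hf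
    rw [dif_pos hf, dif_pos hf']
    exact accRank_congr (ltBd_congr h) hf hf'
  · have hf' : ¬ Acc (ltBd θo) f' := fun hf' =>
      hf (acc_congr (fun g => (ltBd_congr h g).symm) hf')
    rw [dif_neg hf, dif_neg hf']

/-- The relation `<_bd` is well-founded when `θ` is regular uncountable. -/
lemma ltBd_wf {θ : Cardinal.{0}} (hreg : θ.IsRegular) (hθ : ℵ₀ < θ) :
    WellFounded (ltBd θ.ord) := by
  rw [RelEmbedding.wellFounded_iff_isEmpty]
  constructor
  intro e
  have hstep : ∀ n : ℕ, ltBd θ.ord (e (n + 1)) (e n) :=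
    fun n => e.map_rel_iff.2 (Nat.lt_succ_self n)
  choose βs hβlt hβ using hstep
  have hsup : (⨆ n, βs n) < θ.ord := by
    refine Ordinal.iSup_lt_ord ?_ hβlt
    rw [Cardinal.mk_nat, hreg.cof_eq]
    exact hθ
  have hdesc : ∀ n : ℕ, e (n + 1) (⨆ n, βs n) < e n (⨆ n, βs n) :=
    fun n => hβ n _ (Ordinal.le_iSup βs n) hsup
  exact (RelEmbedding.wellFounded_iff_isEmpty.1 wellFounded_lt).false
    (RelEmbedding.natGT (fun n => e n (⨆ n, βs n)) hdesc)

/-- Extension of a bounded function on `Iio θo` to all ordinals. -/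
noncomputable def extFun (θo μ : Ordinal.{0}) (u : Iio θo → Iio μ) : Ordinal → Ordinal :=
  fun i => if h : i < θo then (u ⟨i, h⟩ : Ordinal) else 0

/-- Any function with values `< μ` on `Iio θo` has the same rank as a canonical extension. -/
lemma GHrank_eq_extFun {θo μ : Ordinal.{0}} (hθo : 0 < θo) {f : Ordinal → Ordinal}
    (hf : ∀ i < θo, f i < μ) :
    GHrank θo f = GHrank θo (extFun θo μ (fun i => ⟨f i, hf i i.2⟩)) := by
  refine GHrank_congr ⟨0, hθo, fun i _ hi' => ?_⟩
  simp only [extFun]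
  rw [dif_pos hi']

/-- The set of possible ranks of the predecessors of a bounded function is bounded above. -/
lemma pred_bddAbove {θo μ : Ordinal.{0}} (hθo : 0 < θo) {f : Ordinal → Ordinal}
    (hf : ∀ i < θo, f i < μ) (h : Acc (ltBd θo) f) :
    BddAbove (Set.range fun y : {y // ltBd θo y f} => Order.succ (accRank (h.inv y.2))) := by
  have hsub : (Set.range fun y : {y // ltBd θo y f} => Order.succ (accRank (h.inv y.2))) ⊆
      Set.range fun u : Iio θo → Iio μ => Order.succ (GHrank θo (extFun θo μ u)) := by
    rintro x ⟨⟨g, hg⟩, rfl⟩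
    dsimp only
    obtain ⟨β, hβ, hgf⟩ := hg
    refine ⟨fun i => ⟨min (g i) (f i), lt_of_le_of_lt (min_le_right _ _) (hf i i.2)⟩, ?_⟩
    have h1 : GHrank θo (extFun θo μ
        (fun i => ⟨min (g i) (f i), lt_of_le_of_lt (min_le_right _ _) (hf i i.2)⟩)) =
        GHrank θo g := by
      refine GHrank_congr ⟨β, hβ, fun i hi hi' => ?_⟩
      simp only [extFun]
      rw [dif_pos hi']
      exact min_eq_left (hgf i hi hi').le
    have h2 : GHrank θo g = accRank (h.inv ⟨β, hβ, hgf⟩) := by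
      unfold GHrank
      rw [dif_pos (h.inv ⟨β, hβ, hgf⟩)]
    exact congrArg Order.succ (h1.trans h2)
  have hsmall : Small.{0} (Set.range fun u : Iio θo → Iio μ =>
      Order.succ (GHrank θo (extFun θo μ u))) := small_range _
  have := Ordinal.bddAbove_of_small (s := Set.range fun u : Iio θo → Iio μ =>
      Order.succ (GHrank θo (extFun θo μ u)))
  exact BddAbove.mono hsub this

/-- Rank strictly increases along `<_bd` below a bounded function. -/
lemma GHrank_lt {θo μ : Ordinal.{0}} (hθo : 0 < θo) {f g : Ordinal → Ordinal}
    (hf : ∀ i < θo, f i < μ) (h : Acc (ltBd θo) f) (hg : ltBd θo g f) :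
    GHrank θo g < GHrank θo f := by
  have hAg : Acc (ltBd θo) g := h.inv hg
  have heq : GHrank θo f = accRank h := by unfold GHrank; rw [dif_pos h]
  have heqg : GHrank θo g = accRank hAg := by unfold GHrank; rw [dif_pos hAg]
  rw [heq, heqg, accRank_eq h]
  have hmem : Order.succ (accRank hAg) ∈
      Set.range fun y : {y // ltBd θo y f} => Order.succ (accRank (h.inv y.2)) :=
    ⟨⟨g, hg⟩, rfl⟩
  exact Order.succ_le_iff.1 (le_csSup (pred_bddAbove hθo hf h) hmem)

/-- The defining set of `GHbound θo μ` is nonempty. -/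
lemma GH_set_nonempty (θo μ : Ordinal.{0}) (hθo : 0 < θo) :
    {a : Ordinal | ∀ f : Ordinal → Ordinal, (∀ i < θo, f i < μ) → GHrank θo f < a}.Nonempty := by
  refine ⟨Order.succ (⨆ u : Iio θo → Iio μ, GHrank θo (extFun θo μ u)), fun f hf => ?_⟩
  rw [GHrank_eq_extFun hθo hf]
  exact lt_of_le_of_lt (Ordinal.le_iSup (fun u : Iio θo → Iio μ => GHrank θo (extFun θo μ u))
    (fun i => ⟨f i, hf i i.2⟩)) (Order.lt_succ _)

/-- if `λ` is weakly inaccessible, `ω < θ < λ` is regular and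
`GH(θ, λ) ≤ λ`, then `GH(θ, δ) < λ` for every `δ < λ`. -/
theorem stmt8 (lam θ : Cardinal) (hw : IsWInaccessible lam)
    (hθreg : θ.IsRegular) (hθ0 : ℵ₀ < θ) (hθlam : θ < lam)
    (hGH : GHbound θ.ord lam.ord ≤ lam.ord) :
    ∀ δ < lam.ord, GHbound θ.ord δ < lam.ord := by
  intro δ hδ
  obtain ⟨hlam0, hlamreg, hlamlim⟩ := hw
  have hθo : 0 < θ.ord := (Cardinal.isSuccLimit_ord hθreg.aleph0_le).pos
  have hwf : WellFounded (ltBd θ.ord) := ltBd_wf hθreg hθ0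
  -- Step A: every `f` into `lam.ord` has rank `< lam.ord`.
  have hne := GH_set_nonempty θ.ord lam.ord hθo
  have hmem := csInf_mem hne
  have hA : ∀ f : Ordinal → Ordinal, (∀ i < θ.ord, f i < lam.ord) →
      GHrank θ.ord f < lam.ord := fun f hf => lt_of_lt_of_le (hmem f hf) hGH
  -- Step B: compare with the constant function with value `δ`.
  have hcv : ∀ i < θ.ord, (fun _ : Ordinal => δ) i < lam.ord := fun _ _ => hδ
  have hρ : GHrank θ.ord (fun _ => δ) < lam.ord := hA _ hcv
  have hlimL : Order.IsSuccLimit (lam.ord) := Cardinal.isSuccLimit_ord hlam0.le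
  have hsucc : Order.succ (GHrank θ.ord (fun _ => δ)) < lam.ord := hlimL.succ_lt hρ
  refine lt_of_le_of_lt (csInf_le' ?_) hsucc
  intro f hf
  have hfc : ltBd θ.ord f (fun _ => δ) := ⟨0, hθo, fun i _ hi' => hf i hi'⟩
  exact lt_of_lt_of_le (GHrank_lt hθo hcv (hwf.apply _) hfc) (Order.le_succ _)

end Paper
end

section
/- Let I be an ideal on a set A and θ a regular uncountable cardinal. Then I is weakly θ-saturated and θ-indecomposable if and only if I is θ-irregular. -/
open Cardinal Set

namespace Paper

variable {A : Type}

/-- `I` is weakly `θ`-saturated: the underlying set cannot be partitioned into `θ`-many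
pairwise disjoint `I`-positive pieces. -/
def WeaklySaturated (I : Order.Ideal (Set A)) (θ : Cardinal.{0}) : Prop :=
  ¬ ∃ f : θ.ord.ToType → Set A, (Pairwise fun i j => Disjoint (f i) (f j)) ∧
      (∀ i, f i ∉ I) ∧ (⋃ i, f i) = Set.univ

/-- `I` is `θ`-indecomposable: `I` is closed under unions of `⊆`-increasing
`θ`-sequences of its members. -/
def Indecomposable (I : Order.Ideal (Set A)) (θ : Cardinal.{0}) : Prop :=
  ∀ f : θ.ord.ToType → Set A, Monotone f → (∀ i, f i ∈ I) → (⋃ i, f i) ∈ I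

/-- `I` is `θ`-irregular: any `θ`-sequence of `I`-positive sets has a subfamily of full
size `θ` with nonempty intersection. -/
def Irregular (I : Order.Ideal (Set A)) (θ : Cardinal.{0}) : Prop :=
  ∀ f : θ.ord.ToType → Set A, (∀ i, f i ∉ I) →
    ∃ H : Set θ.ord.ToType, Cardinal.mk H.Elem = θ ∧ (⋂ i ∈ H, f i).Nonempty
lemma bounded_of_mk_lt {θ : Cardinal.{0}} (hreg : θ.IsRegular)
    {s : Set θ.ord.ToType} (hs : #s < θ) : ∃ b, ∀ i ∈ s, i < b := by
  by_contra h
  push_neg at h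
  have hub : Set.Unbounded (· < ·) s := fun a => by
    obtain ⟨i, his, hia⟩ := h a; exact ⟨i, his, not_lt.2 hia⟩
  have := Order.cof_le (s := s) (fun a => by
    obtain ⟨b, hb, h'⟩ := hub a; exact ⟨b, hb, not_lt.1 h'⟩)
  rw [Ordinal.cof_toType, hreg.cof_eq] at this
  exact absurd hs (not_lt.2 this)


/-- for a regular uncountable cardinal `θ`, an ideal `I` is weakly
`θ`-saturated and `θ`-indecomposable iff it is `θ`-irregular. -/
theorem stmt10 (I : Order.Ideal (Set A)) (θ : Cardinal.{0})
    (hreg : θ.IsRegular) (hunc : ℵ₀ < θ) :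
    (WeaklySaturated I θ ∧ Indecomposable I θ) ↔ Irregular I θ := by
  have hne : Nonempty θ.ord.ToType := by
    rw [Ordinal.toType_nonempty_iff_ne_zero]
    simp [Cardinal.ord_eq_zero, hreg.pos.ne']
  constructor
  · rintro ⟨hWS, hInd⟩ f hpos
    by_contra hcon
    push_neg at hcon
    -- every point is in fewer than θ of the sets, so its index set is bounded
    have hHx : ∀ x : A, ∃ b, ∀ i, x ∈ f i → i < b := by
      intro x
      have hmk : #({i | x ∈ f i} : Set θ.ord.ToType) < θ := by
        refine lt_of_le_of_ne ((mk_set_le _).trans_eq (mk_ord_toType θ)) fun e => ?_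
        have := hcon _ e
        have hx : x ∈ ⋂ i ∈ {i | x ∈ f i}, f i := by
          exact Set.mem_iInter₂.2 fun i hi => hi
        rw [this] at hx
        exact hx
      obtain ⟨b, hb⟩ := bounded_of_mk_lt hreg hmk
      exact ⟨b, fun i hi => hb i hi⟩
    set B : θ.ord.ToType → Set A := fun j => {x | ∀ i, x ∈ f i → i < j} with hB
    have hBmono : Monotone B := fun j k hjk x hx i hfi => lt_of_lt_of_le (hx i hfi) hjk
    have hBU : (⋃ j, B j) = Set.univ := by
      rw [Set.eq_univ_iff_forall]
      intro x
      obtain ⟨b, hb⟩ := hHx x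
      exact Set.mem_iUnion.2 ⟨b, hb⟩
    -- key step: above each index there's a positive difference
    have key : ∀ d, ∃ d', B d' \ B d ∉ I := by
      intro d
      by_contra h
      push_neg at h
      have hmem : (⋃ d', B d' \ B d) ∈ I :=
        hInd _ (fun j k hjk => Set.diff_subset_diff_left (hBmono hjk)) h
      rw [← Set.iUnion_diff, hBU] at hmem
      refine hpos d (I.lower (fun x hx => ?_) hmem)
      exact ⟨trivial, fun hxB => lt_irrefl d (hxB d hx)⟩
    choose nxt hnxt using key
    -- well-founded recursion: h with nxt (h η) < h ξ for η < ξ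
    have bexists : ∀ (ξ : θ.ord.ToType) (ih : ∀ η, η < ξ → θ.ord.ToType),
        ∃ b, ∀ η (hη : η < ξ), nxt (ih η hη) < b := by
      intro ξ ih
      obtain ⟨b, hb⟩ := bounded_of_mk_lt hreg
        (s := Set.range fun p : Iio ξ => nxt (ih p.1 p.2))
        (mk_range_le.trans_lt (Cardinal.mk_Iio_ord_toType ξ))
      exact ⟨b, fun η hη => hb _ ⟨⟨η, hη⟩, rfl⟩⟩
    obtain ⟨h, hspec⟩ : ∃ h : θ.ord.ToType → θ.ord.ToType,
        ∀ ξ η, η < ξ → nxt (h η) < h ξ := by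
      refine ⟨IsWellFounded.fix (· < ·) (fun ξ ih => Classical.choose (bexists ξ ih)),
        fun ξ η hη => ?_⟩
      conv_rhs => rw [IsWellFounded.fix_eq]
      exact Classical.choose_spec (bexists ξ (fun y _ =>
        IsWellFounded.fix (· < ·) (fun ξ ih => Classical.choose (bexists ξ ih)) y)) η hη
    set P : θ.ord.ToType → Set A := fun ξ => B (nxt (h ξ)) \ B (h ξ) with hP
    have hPpos : ∀ ξ, P ξ ∉ I := fun ξ => hnxt (h ξ)
    have hPdisj : ∀ η ξ, η < ξ → Disjoint (P η) (P ξ) := by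
      intro η ξ hηξ
      refine Set.disjoint_left.2 fun x hxη hxξ => ?_
      exact hxξ.2 (hBmono (hspec ξ η hηξ).le hxη.1)
    -- merge the leftover into one piece
    obtain ⟨i0⟩ := hne
    set Q : θ.ord.ToType → Set A :=
      fun ξ => if ξ = i0 then P ξ ∪ (Set.univ \ ⋃ η, P η) else P ξ with hQ
    refine hWS ⟨Q, ?_, ?_, ?_⟩
    · intro η ξ hηξ
      have hR : ∀ ζ, Disjoint (Set.univ \ ⋃ η, P η) (P ζ) :=
        fun ζ => Set.disjoint_left.2 fun x hx hxζ => hx.2 (Set.mem_iUnion.2 ⟨ζ, hxζ⟩)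
      have hPd : Disjoint (P η) (P ξ) := by
        rcases lt_or_gt_of_ne hηξ with hl | hl
        · exact hPdisj _ _ hl
        · exact (hPdisj _ _ hl).symm
      simp only [hQ]
      split_ifs with h1 h2 h2
      · exact absurd (h1.trans h2.symm) hηξ
      · exact Set.disjoint_union_left.2 ⟨hPd, hR ξ⟩
      · exact Set.disjoint_union_right.2 ⟨hPd, (hR η).symm⟩
      · exact hPd
    · intro ξ hξ
      refine hPpos ξ (I.lower ?_ hξ)
      simp only [hQ]
      split_ifs
      · exact Set.subset_union_left
      · exact le_rfl
    · rw [Set.eq_univ_iff_forall]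
      intro x
      by_cases hx : x ∈ ⋃ η, P η
      · obtain ⟨η, hη⟩ := Set.mem_iUnion.1 hx
        refine Set.mem_iUnion.2 ⟨η, ?_⟩
        simp only [hQ]
        split_ifs
        · exact Or.inl hη
        · exact hη
      · refine Set.mem_iUnion.2 ⟨i0, ?_⟩
        simp only [hQ, if_pos rfl]
        exact Or.inr ⟨trivial, hx⟩
  · intro hIrr
    constructor
    · rintro ⟨f, hdisj, hpos, -⟩
      obtain ⟨H, hH, x, hx⟩ := hIrr f hpos
      have : Nontrivial H := by
        rw [← Cardinal.one_lt_iff_nontrivial, hH]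
        exact lt_trans one_lt_aleph0 hunc
      obtain ⟨⟨i, hi⟩, ⟨j, hj⟩, hij⟩ := this
      have hne' : i ≠ j := fun e => hij (Subtype.ext e)
      exact Set.disjoint_left.1 (hdisj hne')
        (Set.mem_iInter₂.1 hx i hi) (Set.mem_iInter₂.1 hx j hj)
    · intro f hmono hmem
      by_contra hU
      set g : θ.ord.ToType → Set A := fun i => (⋃ j, f j) \ f i with hg
      have hgpos : ∀ i, g i ∉ I := by
        intro i hgi
        refine hU (I.lower (fun x hx => ?_) (I.sup_mem hgi (hmem i)))
        by_cases h : x ∈ f i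
        · exact Or.inr h
        · exact Or.inl ⟨hx, h⟩
      obtain ⟨H, hH, x, hx⟩ := hIrr g hgpos
      have hHne : H.Nonempty := by
        rw [← Set.nonempty_coe_sort, ← Cardinal.mk_ne_zero_iff, hH]
        exact hreg.pos.ne'
      obtain ⟨i0, hi0⟩ := hHne
      obtain ⟨j, hj⟩ := Set.mem_iUnion.1 (Set.mem_iInter₂.1 hx i0 hi0).1
      obtain ⟨i, hiH, hji⟩ : ∃ i ∈ H, j ≤ i := by
        by_contra hcon
        push_neg at hcon
        have hsub : H ⊆ Iio j := fun i hi => hcon i hi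
        have := (Cardinal.mk_le_mk_of_subset hsub).trans_lt (Cardinal.mk_Iio_ord_toType j)
        rw [hH] at this
        exact lt_irrefl _ this
      exact (Set.mem_iInter₂.1 hx i hiH).2 (hmono hji hj)


end Paper
end

section
/- Let I be an ideal on a set A and θ a regular cardinal. If I is weakly θ-saturated and θ-indecomposable, then for every ⊆-increasing θ-sequence ⟨B_i : i<θ⟩ of subsets of A there exists j*<θ such that for all j with j*≤j<θ, the symmetric difference of B_j and ⋃_{i<θ}B_i lies in I. -/
open Cardinal Set

namespace Paper

variable {A : Type}

/-- if `I` is weakly `θ`-saturated and `θ`-indecomposable (`θ` regular),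
then every `⊆`-increasing `θ`-sequence `⟨B_i⟩` is eventually equal, modulo `I`, to its
union: there is `j* < θ` with `B_j △ ⋃_i B_i ∈ I` for all `j ≥ j*`. -/
theorem stmt11 (I : Order.Ideal (Set A)) (θ : Cardinal.{0}) (hreg : θ.IsRegular)
    (hsat : WeaklySaturated I θ) (hind : Indecomposable I θ)
    (B : θ.ord.ToType → Set A) (hmono : Monotone B) :
    ∃ j' : θ.ord.ToType, ∀ j, j' ≤ j → symmDiff (B j) (⋃ i, B i) ∈ I := by
  by_contra hcon
  push_neg at hcon
  set U := ⋃ i, B i with hU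
  have hBU : ∀ k, B k ⊆ U := fun k => Set.subset_iUnion B k
  -- Every tail U \ B j is I-positive
  have hpos : ∀ k, U \ B k ∉ I := by
    intro k hmem
    obtain ⟨m, hm, hmnot⟩ := hcon k
    apply hmnot
    have hsub : symmDiff (B m) U ⊆ U \ B k := by
      intro a ha
      rcases Set.mem_symmDiff.1 ha with ⟨h1, h2⟩ | ⟨h1, h2⟩
      · exact absurd (hBU m h1) h2
      · exact ⟨h1, fun hb => h2 (hmono hm hb)⟩
    exact I.lower hsub hmem
  have hord0 : (0 : Ordinal) < θ.ord := by
    rw [Cardinal.lt_ord]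
    simpa using hreg.pos
  let e := Ordinal.ToType.mk (o := θ.ord)
  -- key: from any stage we can advance gaining an I-positive piece
  have key : ∀ o : Ordinal, ∀ h : o < θ.ord, ∃ o', ∃ h' : o' < θ.ord,
      o < o' ∧ B (e ⟨o', h'⟩) \ B (e ⟨o, h⟩) ∉ I := by
    intro o h
    by_contra hk
    push_neg at hk
    apply hpos (e ⟨o, h⟩)
    have hun : (⋃ i, (B i \ B (e ⟨o, h⟩))) = U \ B (e ⟨o, h⟩) := by
      rw [hU, Set.iUnion_diff]
    rw [← hun]
    apply hind (fun i => B i \ B (e ⟨o, h⟩))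
    · intro i i' hii'
      exact Set.diff_subset_diff_left (hmono hii')
    · intro i
      rcases le_or_gt ((e.symm i : Ordinal)) o with hle | hlt
      · have : B i ⊆ B (e ⟨o, h⟩) := by
          apply hmono
          have : e.symm i ≤ (⟨o, h⟩ : Set.Iio θ.ord) := hle
          simpa using e.monotone this
        have hempty : B i \ B (e ⟨o, h⟩) = ∅ := Set.diff_eq_empty.2 this
        rw [hempty]
        exact I.bot_mem
      · have := hk (e.symm i) (e.symm i).2 hlt
        simpa using this
  -- the jump function
  let g : Ordinal → Ordinal := fun o => if h : o < θ.ord then (key o h).choose else 0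
  have hg : ∀ o, ∀ h : o < θ.ord, ∃ h' : g o < θ.ord, o < g o ∧
      B (e ⟨g o, h'⟩) \ B (e ⟨o, h⟩) ∉ I := by
    intro o h
    simp only [g, dif_pos h]
    exact (key o h).choose_spec
  -- the recursive sequence
  let F : ∀ α : Ordinal, (∀ β, β < α → Ordinal) → Ordinal := fun α IH => g (Ordinal.blsub α IH)
  let j : Ordinal → Ordinal := Ordinal.lt_wf.fix F
  have jeq : ∀ α, j α = g (Ordinal.blsub α (fun β _ => j β)) := by
    intro α
    exact Ordinal.lt_wf.fix_eq F α
  set s : Ordinal → Ordinal := fun α => Ordinal.blsub α (fun β _ => j β) with hs_def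
  have main : ∀ α, α < θ.ord → s α < θ.ord ∧ j α < θ.ord := by
    intro α
    induction α using Ordinal.lt_wf.induction with
    | _ α IH =>
      intro hα
      have hs : s α < θ.ord := by
        apply Cardinal.blsub_lt_ord_of_isRegular hreg (Cardinal.lt_ord.1 hα)
        intro i hi
        exact (IH i hi (hi.trans hα)).2
      refine ⟨hs, ?_⟩
      obtain ⟨h', _, _⟩ := hg _ hs
      rw [jeq]
      exact h'
  have hsj : ∀ α, α < θ.ord → s α < j α := by
    intro α hα
    obtain ⟨h', hlt, _⟩ := hg _ (main α hα).1
    rw [jeq]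
    exact hlt
  have hjs : ∀ β α, β < α → j β < s α := fun β α h => Ordinal.lt_blsub _ β h
  -- the pieces
  let D : θ.ord.ToType → Set A := fun i =>
    B (e ⟨j (e.symm i), (main _ (e.symm i).2).2⟩) \ B (e ⟨s (e.symm i), (main _ (e.symm i).2).1⟩)
  have hDpos : ∀ i, D i ∉ I := by
    intro i
    obtain ⟨h', hlt, hp⟩ := hg (s (e.symm i)) (main _ (e.symm i).2).1
    have hsub : (⟨g (s (e.symm i)), h'⟩ : Set.Iio θ.ord)
        = ⟨j (e.symm i), (main _ (e.symm i).2).2⟩ := Subtype.ext (jeq _).symm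
    rw [hsub] at hp
    exact hp
  have hDsub : ∀ i, D i ⊆ B (e ⟨j (e.symm i), (main _ (e.symm i).2).2⟩) := fun i =>
    Set.diff_subset
  have hdisj : ∀ i i', ((e.symm i : Ordinal)) < (e.symm i' : Ordinal) → Disjoint (D i) (D i') := by
    intro i i' hlt
    rw [Set.disjoint_left]
    intro a ha ha'
    have h1 : j (e.symm i) < s (e.symm i') := hjs _ _ hlt
    have h2 : B (e ⟨j (e.symm i), (main _ (e.symm i).2).2⟩)
        ⊆ B (e ⟨s (e.symm i'), (main _ (e.symm i').2).1⟩) := by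
      apply hmono
      exact e.monotone h1.le
    exact ha'.2 (h2 (hDsub i ha))
  have hDpair : Pairwise fun i i' => Disjoint (D i) (D i') := by
    intro i i' hne
    rcases lt_trichotomy ((e.symm i : Ordinal)) ((e.symm i' : Ordinal)) with h | h | h
    · exact hdisj i i' h
    · exfalso
      apply hne
      have : e.symm i = e.symm i' := Subtype.ext h
      simpa using congrArg e this
    · exact (hdisj i' i h).symm
  -- assemble a partition of univ
  let i0 : θ.ord.ToType := e ⟨0, hord0⟩
  let f : θ.ord.ToType → Set A := fun i => if i = i0 then D i0 ∪ (⋃ k, D k)ᶜ else D i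
  apply hsat
  refine ⟨f, ?_, ?_, ?_⟩
  · intro i i' hne
    by_cases h1 : i = i0 <;> by_cases h2 : i' = i0
    · exact absurd (h1.trans h2.symm) hne
    · simp only [f, if_pos h1, if_neg h2]
      rw [Set.disjoint_union_left]
      constructor
      · exact hDpair (Ne.symm h2)
      · rw [Set.disjoint_left]
        intro a ha ha'
        exact ha (Set.mem_iUnion.2 ⟨i', ha'⟩)
    · simp only [f, if_neg h1, if_pos h2]
      rw [Set.disjoint_union_right]
      constructor
      · exact hDpair h1
      · rw [Set.disjoint_right]
        intro a ha ha'
        exact ha (Set.mem_iUnion.2 ⟨i, ha'⟩)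
    · simp only [f, if_neg h1, if_neg h2]
      exact hDpair hne
  · intro i hi
    apply hDpos i
    by_cases h1 : i = i0
    · subst h1
      simp only [f, if_pos rfl] at hi
      exact I.lower Set.subset_union_left hi
    · simpa only [f, if_neg h1] using hi
  · apply Set.eq_univ_of_forall
    intro a
    by_cases ha : a ∈ ⋃ k, D k
    · obtain ⟨k, hk⟩ := Set.mem_iUnion.1 ha
      apply Set.mem_iUnion.2 ⟨k, ?_⟩
      by_cases h1 : k = i0
      · subst h1; simp only [f, if_pos rfl]; exact Set.mem_union_left _ hk
      · simp only [f, if_neg h1]; exact hk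
    · apply Set.mem_iUnion.2 ⟨i0, ?_⟩
      simp only [f, if_pos rfl]
      exact Set.mem_union_right _ ha

end Paper
end

section
/- An ideal I on a set A is κ-complete (closed under unions of fewer than κ sets in I) if and only if I is θ-indecomposable for every regular cardinal θ<κ. -/
open Cardinal Set

namespace Paper

variable {A : Type}

/-- Finite unions of members of an ideal belong to the ideal. -/
lemma finUnion_mem (I : Order.Ideal (Set A)) {ι : Type} (f : ι → Set A)
    (hf : ∀ i, f i ∈ I) (s : Finset ι) : (⋃ i ∈ s, f i) ∈ I := by
  classical
  induction s using Finset.induction_on with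
  | empty => simpa using I.bot_mem
  | insert a s ha ih =>
    rw [Finset.set_biUnion_insert]
    exact I.sup_mem (hf _) ih

lemma key (I : Order.Ideal (Set A)) (κ : Cardinal.{0})
    (H : ∀ θ : Cardinal.{0}, θ.IsRegular → θ < κ → Indecomposable I θ) :
    ∀ μ : Cardinal.{0}, μ < κ → ∀ (ι : Type) (f : ι → Set A), Cardinal.mk ι ≤ μ →
      (∀ i, f i ∈ I) → (⋃ i, f i) ∈ I := by
  intro μ
  induction μ using WellFoundedLT.induction with
  | _ μ IH =>
  intro hμκ ι f hι hf
  rcases lt_or_ge μ ℵ₀ with hfin | hinf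
  · -- finite case
    have : Finite ι := Cardinal.lt_aleph0_iff_finite.mp (hι.trans_lt hfin)
    have := Fintype.ofFinite ι
    have h := finUnion_mem I f hf Finset.univ
    simpa using h
  · rcases lt_or_eq_of_le hι with hlt | heq
    · exact IH _ hlt (hlt.trans hμκ) ι f le_rfl hf
    · -- #ι = μ, μ infinite
      have e : μ.ord.ToType ≃ ι :=
        Classical.choice (Cardinal.eq.mp (by rw [mk_ord_toType]; exact heq.symm))
      set F : μ.ord.ToType → Set A := f ∘ e with hF
      set g : μ.ord.ToType → Set A := fun i => ⋃ j ∈ Iic i, F j with hg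
      have hgmono : Monotone g := fun i i' hii' =>
        Set.biUnion_subset_biUnion_left (Iic_subset_Iic.mpr hii')
      have hgI : ∀ i, g i ∈ I := by
        intro i
        have hsplit : g i = F i ∪ ⋃ j ∈ Iio i, F j := by
          rw [hg]
          simp only
          rw [← Set.Iio_union_right, Set.biUnion_union, Set.biUnion_singleton, Set.union_comm]
        rw [hsplit]
        refine I.sup_mem (hf _) ?_
        have hcard : Cardinal.mk (Iio i) < μ := mk_Iio_ord_toType i
        have : (⋃ j ∈ Iio i, F j) = ⋃ j : Iio i, F j := by
          rw [Set.iUnion_subtype]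
        rw [this]
        exact IH _ hcard (hcard.trans hμκ) _ _ le_rfl (fun j => hf _)
      have hgsub : ∀ i, g i ⊆ ⋃ x, f x := by
        intro i a ha
        simp only [hg, Set.mem_iUnion] at ha
        obtain ⟨j, _, hj⟩ := ha
        exact Set.mem_iUnion.mpr ⟨e j, hj⟩
      have hFg : ∀ i, F i ⊆ g i := fun i => Set.subset_biUnion_of_mem (mem_Iic.mpr le_rfl)
      -- cofinality
      set θ : Cardinal := (μ.ord).cof with hθ
      have hlim : Order.IsSuccLimit μ.ord := Cardinal.isSuccLimit_ord hinf
      have hreg : θ.IsRegular := Cardinal.isRegular_cof hlim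
      have hθμ : θ ≤ μ := by
        have := Ordinal.cof_ord_le μ
        exact this
      have hθκ : θ < κ := lt_of_le_of_lt hθμ hμκ
      obtain ⟨S, hSub, hScard⟩ :=
        Order.exists_cof_eq μ.ord.ToType
      rw [Ordinal.cof_toType] at hScard
      have e2 : θ.ord.ToType ≃ S :=
        Classical.choice (Cardinal.eq.mp (by rw [mk_ord_toType, hScard]))
      set h : θ.ord.ToType → Set A := fun k => ⋃ j ∈ Iic k, g (e2 j : S) with hh
      have hhmono : Monotone h := fun k k' hkk' =>
        Set.biUnion_subset_biUnion_left (Iic_subset_Iic.mpr hkk')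
      have hhI : ∀ k, h k ∈ I := by
        intro k
        have hsplit : h k = g (e2 k : S) ∪ ⋃ j ∈ Iio k, g (e2 j : S) := by
          rw [hh]
          simp only
          rw [← Set.Iio_union_right, Set.biUnion_union, Set.biUnion_singleton, Set.union_comm]
        rw [hsplit]
        refine I.sup_mem (hgI _) ?_
        have hcard : Cardinal.mk (Iio k) < θ := mk_Iio_ord_toType k
        have : (⋃ j ∈ Iio k, g (e2 j : S)) = ⋃ j : Iio k, g (e2 j : S) := by
          rw [Set.iUnion_subtype]
        rw [this]
        exact IH _ (hcard.trans_le hθμ) ((hcard.trans_le hθμ).trans hμκ) _ _ le_rfl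
          (fun j => hgI _)
      have hunion : (⋃ k, h k) = ⋃ i, f i := by
        apply Set.Subset.antisymm
        · refine Set.iUnion_subset fun k => ?_
          refine Set.iUnion₂_subset fun j _ => hgsub _
        · refine Set.iUnion_subset fun i => ?_
          obtain ⟨s, hsS, hs⟩ := hSub (e.symm i)
          have hle : e.symm i ≤ s := hs
          have h1 : f i ⊆ g s := by
            have : f i = F (e.symm i) := by simp [hF]
            rw [this]
            exact (hFg _).trans (hgmono hle)
          have h2 : g s ⊆ h (e2.symm ⟨s, hsS⟩) := by
            have heq2 : g s = g (e2 (e2.symm ⟨s, hsS⟩) : S) := by rw [Equiv.apply_symm_apply]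
            rw [heq2]
            show _ ⊆ ⋃ j ∈ Iic (e2.symm ⟨s, hsS⟩), g (e2 j : S)
            exact Set.subset_biUnion_of_mem (u := fun j => g (e2 j : S)) (mem_Iic.mpr (le_refl (e2.symm ⟨s, hsS⟩)))
          exact h1.trans (h2.trans (Set.subset_iUnion _ _))
      rw [← hunion]
      exact H θ hreg hθκ h hhmono hhI

/-- an ideal `I` is `κ`-complete (closed under unions of fewer than
`κ`-many members) iff `I` is `θ`-indecomposable for every regular `θ < κ`. -/
theorem stmt12 (I : Order.Ideal (Set A)) (κ : Cardinal.{0}) :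
    (∀ (ι : Type) (f : ι → Set A), Cardinal.mk ι < κ → (∀ i, f i ∈ I) → (⋃ i, f i) ∈ I) ↔
    (∀ θ : Cardinal.{0}, θ.IsRegular → θ < κ → Indecomposable I θ) := by
  constructor
  · intro hc θ hreg hθκ f hmono hf
    exact hc _ f (by rwa [mk_ord_toType]) hf
  · intro H ι f hι hf
    exact key I κ H (Cardinal.mk ι) hι ι f le_rfl hf

end Paper
end

section
/- Suppose λ is a Jónsson cardinal and I is a co-Jónsson ideal on λ, with dual filter witnessed by a coloring G:[λ]^{<ω}→λ as in the coloring characterization. If λ can be partitioned into θ-many disjoint I-positive sets ⟨A_i : i<θ⟩, then there is a coloring c:[λ]^{<ω}→θ with no weakly homogeneous set of size λ (i.e. witnessing λ↛[λ]^{<ω}_θ). -/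
open Cardinal Set

namespace Paper

/-- `λ → [λ]^{<ω}_λ`: `λ` is a Jónsson cardinal. For every coloring `F` of the finite
subsets of `λ` by ordinals `< λ` there is `A ⊆ λ` of full size `λ` omitting some color. -/
def IsJonsson (lam : Cardinal) : Prop :=
  ∀ F : Finset Ordinal → Ordinal,
    (∀ s : Finset Ordinal, ↑s ⊆ Set.Iio lam.ord → F s < lam.ord) →
    ∃ A : Set Ordinal, A ⊆ Set.Iio lam.ord ∧ Cardinal.mk A.Elem = Cardinal.lift.{1, 0} lam ∧
      ∃ b < lam.ord, ∀ s : Finset Ordinal, ↑s ⊆ A → F s ≠ b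
/-- if `λ` is Jónsson, `I` is a co-Jónsson ideal on `λ` as witnessed by a
coloring `G` (the range of `G` on any set of size `λ` is in the dual filter), and `λ` is
partitioned into `θ`-many disjoint `I`-positive sets, then there is a coloring
`c : [λ]^{<ω} → θ` with no weakly homogeneous set of size `λ`, witnessing
`λ ↛ [λ]^{<ω}_θ`. -/
theorem stmt15 (lam θ : Cardinal) (hJ : IsJonsson lam)
    (I : Order.Ideal (Set Ordinal))
    (G : Finset Ordinal → Ordinal)
    (hGrange : ∀ s : Finset Ordinal, ↑s ⊆ Set.Iio lam.ord → G s < lam.ord)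
    (hG : ∀ A : Set Ordinal, A ⊆ Set.Iio lam.ord →
        Cardinal.mk A.Elem = Cardinal.lift.{1, 0} lam →
        Set.Iio lam.ord \ {b : Ordinal | ∃ s : Finset Ordinal, ↑s ⊆ A ∧ G s = b} ∈ I)
    (f : Ordinal → Set Ordinal)
    (hdisj : ∀ i < θ.ord, ∀ j < θ.ord, i ≠ j → Disjoint (f i) (f j))
    (hpos : ∀ i < θ.ord, f i ∉ I)
    (hcover : (⋃ i ∈ Set.Iio θ.ord, f i) = Set.Iio lam.ord) :
    ∃ c : Finset Ordinal → Ordinal,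
      (∀ s : Finset Ordinal, ↑s ⊆ Set.Iio lam.ord → c s < θ.ord) ∧
      ∀ A : Set Ordinal, A ⊆ Set.Iio lam.ord →
        Cardinal.mk A.Elem = Cardinal.lift.{1, 0} lam →
        ∀ b < θ.ord, ∃ s : Finset Ordinal, ↑s ⊆ A ∧ c s = b := by
  classical
  -- key: any element of `Iio lam.ord` lies in some `f i`, `i < θ.ord`
  have hmem : ∀ s : Finset Ordinal, ↑s ⊆ Set.Iio lam.ord →
      ∃ i, i < θ.ord ∧ G s ∈ f i := by
    intro s hs
    have h1 : G s ∈ Set.Iio lam.ord := hGrange s hs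
    rw [← hcover] at h1
    simpa using h1
  refine ⟨fun s => if h : ∃ i, i < θ.ord ∧ G s ∈ f i then h.choose else 0, ?_, ?_⟩
  · intro s hs
    have h := hmem s hs
    simp only [dif_pos h]
    exact h.choose_spec.1
  · intro A hA hcard b hb
    -- `f b` meets the range of `G` on finite subsets of `A`
    set R : Set Ordinal := {x : Ordinal | ∃ s : Finset Ordinal, ↑s ⊆ A ∧ G s = x} with hR
    have hD : Set.Iio lam.ord \ R ∈ I := hG A hA hcard
    have hfb : f b ⊆ Set.Iio lam.ord := by
      rw [← hcover]
      exact Set.subset_biUnion_of_mem hb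
    have hne : (f b ∩ R).Nonempty := by
      by_contra hcon
      rw [Set.not_nonempty_iff_eq_empty] at hcon
      have hsub : f b ⊆ Set.Iio lam.ord \ R := by
        intro x hx
        refine ⟨hfb hx, fun hxR => ?_⟩
        have : x ∈ f b ∩ R := ⟨hx, hxR⟩
        rw [hcon] at this
        exact this
      exact hpos b hb (I.lower hsub hD)
    obtain ⟨x, hxfb, s, hsA, hGs⟩ := hne
    refine ⟨s, hsA, ?_⟩
    have hex : ∃ i, i < θ.ord ∧ G s ∈ f i := ⟨b, hb, hGs ▸ hxfb⟩
    simp only [dif_pos hex]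
    by_contra hne'
    have h1 := hex.choose_spec
    have := hdisj _ h1.1 _ hb hne'
    exact (Set.disjoint_left.mp this h1.2) (hGs ▸ hxfb)

end Paper
end
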